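/- Let 𝒵 be a root function with support Ψ such that Z_α is a subgroup of ℤ for every α ∈ Ψ. Then there is a unique admissible subgroup X of Ω(Ψ) such that Z_α = X(α) for all α ∈ Ψ. -/

import Mathlib

open Module Submodule

variable {V : Type*}

/-- For `A, B ⊆ ℤ` and `c : ℤ`, the set `A - c·B = {a - c*b | a ∈ A, b ∈ B}`. -/
def zdiff (A : Set ℤ) (c : ℤ) (B : Set ℤ) : Set ℤ := {z | ∃ a ∈ A, ∃ b ∈ B, z = a - c * b}

/-- The set `n·ℤ` of integer multiples of `n`. -/
def zmul (n : ℤ) : Set ℤ := {z | ∃ k : ℤ, z = n * k}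

/-- Minkowski sum of two sets of integers. -/
def msum (A B : Set ℤ) : Set ℤ := {z | ∃ a ∈ A, ∃ b ∈ B, z = a + b}

section
variable [AddCommGroup V] [Module ℝ V]

/-- `Ψ` is a root subsystem of `Φ` (with coroot assignment `cv`):
`Ψ ⊆ Φ` and `s_α(β) = β - ⟨β,α∨⟩•α ∈ Ψ` for all `α, β ∈ Ψ`. -/
def IsRootSubsystem (Φ : Set V) (cv : V → Module.Dual ℝ V) (Ψ : Set V) : Prop :=
  Ψ ⊆ Φ ∧ ∀ α ∈ Ψ, ∀ β ∈ Ψ, β - cv α β • α ∈ Ψ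

/-- `Z : V → Set ℤ` is a root function for `Φ`:
`Z β - ⟨β,α∨⟩·Z α ⊆ Z (s_α β)` for all `α, β ∈ Φ`.
Here `pairInt β α` is the integer `⟨β, α∨⟩`. -/
def IsRootFunction (Φ : Set V) (cv : V → Module.Dual ℝ V) (pairInt : V → V → ℤ)
    (Z : V → Set ℤ) : Prop :=
  ∀ α ∈ Φ, ∀ β ∈ Φ, zdiff (Z β) (pairInt β α) (Z α) ⊆ Z (β - cv α β • α)

/-- `S` is a root subsystem of the loop extension `Φ × ℤ`:
`S ⊆ Φ × ℤ` and `S` is closed under the reflections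
`ŝ_(α,m) (β,n) = (s_α β, n - m·⟨β,α∨⟩)`. -/
def IsLoopSubsystem (Φ : Set V) (cv : V → Module.Dual ℝ V) (pairInt : V → V → ℤ)
    (S : Set (V × ℤ)) : Prop :=
  (∀ p ∈ S, p.1 ∈ Φ) ∧
  ∀ p ∈ S, ∀ q ∈ S, (q.1 - cv p.1 q.1 • p.1, q.2 - p.2 * pairInt q.1 p.1) ∈ S

/-- The group `W_Ψ` of linear automorphisms of `V` generated by the reflections
`s_α : v ↦ v - ⟨v,α∨⟩•α` for `α ∈ Ψ`. -/
def WGroup (cv : V → Module.Dual ℝ V) (Ψ : Set V) (h2 : ∀ α ∈ Ψ, cv α α = 2) :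
    Subgroup (V ≃ₗ[ℝ] V) :=
  Subgroup.closure {w | ∃ α, ∃ hα : α ∈ Ψ, w = Module.reflection (h2 α hα)}

/-- `X(α) = {f(α) | f ∈ X}` for a set `X` of coweights (elements of `Ω(Ψ) = Hom_ℤ(ℤΨ, ℤ)`,
where `ℤΨ = span ℤ Γ`). -/
def Xval (Γ : Set V) (X : Set (span ℤ (Γ : Set V) →ₗ[ℤ] ℤ)) {α : V}
    (h : α ∈ span ℤ Γ) : Set ℤ :=
  {z | ∃ f ∈ X, f ⟨α, h⟩ = z}

/-- `X` is an admissible subgroup of the coweight lattice `Ω(Ψ) = Hom_ℤ(ℤΨ, ℤ)`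
(`ℤΨ = span ℤ Γ`): there is `N : Ψ → ℕ` with `n_β ∣ ⟨β,α∨⟩·n_α` for all `α, β ∈ Ψ` and
`n_{w(α)} = n_α` for all `α ∈ Ψ`, `w ∈ W_Ψ`, such that
`X = {f ∈ Ω(Ψ) | f(α) ∈ n_α·ℤ for all α ∈ Ψ}`. -/
def IsAdmissibleSubgroup (cv : V → Module.Dual ℝ V) (pairInt : V → V → ℤ)
    (Γ Ψ : Set V) (h2Ψ : ∀ α ∈ Ψ, cv α α = 2) (hspan : ∀ α ∈ Ψ, α ∈ span ℤ Γ)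
    (X : AddSubgroup (span ℤ (Γ : Set V) →ₗ[ℤ] ℤ)) : Prop :=
  ∃ N : V → ℕ,
    (∀ α ∈ Ψ, ∀ β ∈ Ψ, (N β : ℤ) ∣ pairInt β α * N α) ∧
    (∀ α ∈ Ψ, ∀ w ∈ WGroup cv Ψ h2Ψ, N (w α) = N α) ∧
    ((X : Set (span ℤ (Γ : Set V) →ₗ[ℤ] ℤ)) =
      {f | ∀ α, ∀ hα : α ∈ Ψ, (N α : ℤ) ∣ f ⟨α, hspan α hα⟩})

end

variable [AddCommGroup V] [Module ℝ V]


lemma zmul_mem_iff {n : ℕ} {x : ℤ} : x ∈ zmul (n : ℤ) ↔ (n : ℤ) ∣ x := by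
  constructor
  · rintro ⟨k, rfl⟩; exact ⟨k, rfl⟩
  · rintro ⟨k, rfl⟩; exact ⟨k, rfl⟩

lemma self_mem_zmul (n : ℕ) : (n : ℤ) ∈ zmul (n : ℤ) := ⟨1, (mul_one _).symm⟩

lemma zero_mem_zmul (n : ℤ) : (0 : ℤ) ∈ zmul n := ⟨0, (mul_zero _).symm⟩

theorem stmt10
    (Φ : Set V) (cv : V → Module.Dual ℝ V) (pairInt : V → V → ℤ)
    (hne : ∀ α ∈ Φ, α ≠ 0)
    (h2 : ∀ α ∈ Φ, cv α α = 2)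
    (hpair : ∀ α ∈ Φ, ∀ β ∈ Φ, (pairInt β α : ℝ) = cv α β)
    (hrefl : ∀ α ∈ Φ, (fun β => β - cv α β • α) '' Φ = Φ)
    (Γ Ψ : Set V) (hΓΦ : Γ ⊆ Φ)
    (hli : LinearIndependent ℝ (fun γ : Γ => (γ : V)))
    (hΨΦ : Ψ ⊆ Φ) (hΨcl : ∀ α ∈ Ψ, ∀ β ∈ Ψ, β - cv α β • α ∈ Ψ)
    (hΓΨ : Γ ⊆ Ψ)
    (hmin : ∀ Ψ', IsRootSubsystem Φ cv Ψ' → Γ ⊆ Ψ' → Ψ ⊆ Ψ')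
    (hspan : ∀ α ∈ Ψ, α ∈ span ℤ Γ)
    (Z : V → Set ℤ) (hZ : IsRootFunction Φ cv pairInt Z)
    (hsupp : {α ∈ Φ | Z α ≠ ∅} = Ψ)
    (hgrp : ∀ α ∈ Ψ, ∃ n : ℕ, Z α = zmul n) :
    ∃! X : AddSubgroup (span ℤ Γ →ₗ[ℤ] ℤ),
      IsAdmissibleSubgroup cv pairInt Γ Ψ (fun α hα => h2 α (hΨΦ hα)) hspan X ∧
      ∀ α, ∀ hα : α ∈ Ψ,
        Z α = Xval Γ (X : Set (span ℤ Γ →ₗ[ℤ] ℤ)) (hspan α hα) := by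
  
  classical
  -- multiplier function n
  choose nn hnn using hgrp
  let n : V → ℕ := fun α => if h : α ∈ Ψ then nn α h else 0
  have hZn : ∀ α (hα : α ∈ Ψ), Z α = zmul (n α) := by
    intro α hα
    simp only [n, dif_pos hα]
    exact hnn α hα
  -- basic reflection facts
  have hsΦ : ∀ α ∈ Φ, ∀ β ∈ Φ, β - cv α β • α ∈ Φ := by
    intro α hα β hβ
    have h := hrefl α hα
    have hmem : β - cv α β • α ∈ (fun β => β - cv α β • α) '' Φ := ⟨β, hβ, rfl⟩
    rwa [h] at hmem
  have hcvs : ∀ α ∈ Φ, ∀ β : V, cv α (β - cv α β • α) = - cv α β := by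
    intro α hα β
    rw [map_sub, map_smul, h2 α hα, smul_eq_mul]
    ring
  have hss : ∀ α ∈ Φ, ∀ β : V, (β - cv α β • α) - cv α (β - cv α β • α) • α = β := by
    intro α hα β
    rw [hcvs α hα β, neg_smul, sub_neg_eq_add, sub_add_cancel]
  have hpair_s : ∀ α ∈ Φ, ∀ β ∈ Φ, pairInt (β - cv α β • α) α = - pairInt β α := by
    intro α hα β hβ
    have h1 := hpair α hα _ (hsΦ α hα β hβ)
    have h2' := hpair α hα β hβ
    have h3 := hcvs α hα β
    have : ((pairInt (β - cv α β • α) α : ℤ) : ℝ) = ((- pairInt β α : ℤ) : ℝ) := by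
      push_cast
      rw [h1, h3, h2']
    exact_mod_cast this
  -- key facts F1, F2
  have hF : ∀ α, α ∈ Ψ → ∀ β, β ∈ Ψ →
      n (β - cv α β • α) = n β ∧ (n β : ℤ) ∣ pairInt β α * n α := by
    intro α hα β hβ
    have hαΦ := hΨΦ hα
    have hβΦ := hΨΦ hβ
    have hsΨ : β - cv α β • α ∈ Ψ := hΨcl α hα β hβ
    have h1 := hZ α hαΦ β hβΦ
    have h2' := hZ α hαΦ _ (hΨΦ hsΨ)
    rw [hss α hαΦ β] at h2'
    rw [hZn α hα, hZn β hβ, hZn _ hsΨ] at h1 h2'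
    -- n s ∣ n β
    have d1 : (n (β - cv α β • α) : ℤ) ∣ (n β : ℤ) :=
      zmul_mem_iff.mp (h1 ⟨(n β : ℤ), self_mem_zmul _, 0, zero_mem_zmul _, by ring⟩)
    have d2' : (n (β - cv α β • α) : ℤ) ∣ 0 - pairInt β α * n α :=
      zmul_mem_iff.mp (h1 ⟨0, zero_mem_zmul _, (n α : ℤ), self_mem_zmul _, rfl⟩)
    have d2 : (n (β - cv α β • α) : ℤ) ∣ pairInt β α * n α := by
      simpa using d2'
    have d3 : (n β : ℤ) ∣ (n (β - cv α β • α) : ℤ) :=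
      zmul_mem_iff.mp (h2' ⟨(n (β - cv α β • α) : ℤ), self_mem_zmul _, 0, zero_mem_zmul _, by ring⟩)
    have heq : n (β - cv α β • α) = n β := by
      have := Int.dvd_antisymm (by positivity) (by positivity) d1 d3
      exact_mod_cast this
    exact ⟨heq, heq ▸ d2⟩
  -- basis of the root lattice
  have hliZ : LinearIndependent ℤ (fun γ : Γ => (γ : V)) := by
    refine hli.restrict_scalars ?_
    intro a b hab
    simpa [zsmul_eq_mul] using hab
  let b : Basis Γ ℤ (span ℤ (Γ : Set V)) :=
    (Basis.span hliZ).map (LinearEquiv.ofEq _ _ (by rw [Subtype.range_coe]))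
  have hbval : ∀ γ : Γ, ((b γ : span ℤ (Γ : Set V)) : V) = (γ : V) := by
    intro γ
    simp only [b, Basis.map_apply, LinearEquiv.coe_ofEq_apply]
    exact congrArg Subtype.val (Basis.span_apply hliZ γ)
  -- expansion lemmas
  have hE1 : ∀ x : span ℤ (Γ : Set V),
      (x : V) = (b.repr x).sum fun γ a => a • (γ : V) := by
    intro x
    conv_lhs => rw [← b.linearCombination_repr x]
    rw [Finsupp.linearCombination_apply]
    rw [Finsupp.sum, Finsupp.sum, AddSubmonoidClass.coe_finset_sum]
    refine Finset.sum_congr rfl fun γ _ => ?_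
    rw [SetLike.val_smul, hbval]
  have hE2 : ∀ (f : span ℤ (Γ : Set V) →ₗ[ℤ] ℤ) (x : span ℤ (Γ : Set V)),
      f x = (b.repr x).sum fun γ a => a * f (b γ) := by
    intro f x
    conv_lhs => rw [← b.linearCombination_repr x]
    rw [Finsupp.linearCombination_apply, Finsupp.sum, Finsupp.sum, map_sum]
    refine Finset.sum_congr rfl fun γ _ => ?_
    rw [map_smul, smul_eq_mul]
  have hE3 : ∀ α ∈ Φ, ∀ x : span ℤ (Γ : Set V), (x : V) ∈ Φ →
      ((b.repr x).sum fun γ a => a * pairInt (γ : V) α) = pairInt (x : V) α := by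
    intro α hα x hx
    have hcast : (((b.repr x).sum fun γ a => a * pairInt (γ : V) α : ℤ) : ℝ)
        = cv α (x : V) := by
      rw [hE1 x, Finsupp.sum, Finsupp.sum, Int.cast_sum, map_sum]
      refine Finset.sum_congr rfl fun γ _ => ?_
      rw [map_zsmul, Int.cast_mul, hpair α hα _ (hΓΦ γ.2), zsmul_eq_mul]
    have := hcast.trans (hpair α hα _ hx).symm
    exact_mod_cast this
  -- the set of roots satisfying claims A and B
  let P : V → Prop := fun α => ∃ hα : α ∈ Ψ,
      (∀ γ : Γ, (n α : ℤ) ∣ b.repr ⟨α, hspan α hα⟩ γ * n (γ : V)) ∧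
      ∃ f : span ℤ (Γ : Set V) →ₗ[ℤ] ℤ,
        (∀ γ : Γ, (n (γ : V) : ℤ) ∣ f (b γ)) ∧ f ⟨α, hspan α hα⟩ = n α
  have hΓP : ∀ γ₀ ∈ Γ, P γ₀ := by
    intro γ₀ hγ₀
    have hγ₀Ψ : γ₀ ∈ Ψ := hΓΨ hγ₀
    have hbe : (⟨γ₀, hspan γ₀ hγ₀Ψ⟩ : span ℤ (Γ : Set V)) = b ⟨γ₀, hγ₀⟩ :=
      Subtype.ext (hbval ⟨γ₀, hγ₀⟩).symm
    refine ⟨hγ₀Ψ, ?_, ?_⟩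
    · intro γ
      rw [hbe, b.repr_self, Finsupp.single_apply]
      by_cases h : (⟨γ₀, hγ₀⟩ : Γ) = γ
      · rw [if_pos h, one_mul, ← h]
      · rw [if_neg h, zero_mul]
        exact dvd_zero _
    · refine ⟨(n γ₀ : ℤ) • b.coord ⟨γ₀, hγ₀⟩, ?_, ?_⟩
      · intro γ
        rw [LinearMap.smul_apply, Basis.coord_apply, b.repr_self, Finsupp.single_apply,
          smul_eq_mul]
        by_cases h : γ = (⟨γ₀, hγ₀⟩ : Γ)
        · rw [if_pos h, mul_one, h]
        · rw [if_neg h, mul_zero]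
          exact dvd_zero _
      · rw [hbe, LinearMap.smul_apply, Basis.coord_apply, b.repr_self,
          Finsupp.single_apply, if_pos rfl, smul_eq_mul, mul_one]
  have hPcl : ∀ α ∈ {α : V | P α}, ∀ β ∈ {α : V | P α}, β - cv α β • α ∈ {α : V | P α} := by
    intro α hPα β hPβ
    obtain ⟨hα, hdα, fα, hfαdiv, hfαval⟩ := hPα
    obtain ⟨hβ, hdβ, fβ, hfβdiv, hfβval⟩ := hPβ
    have hαΦ := hΨΦ hα
    have hβΦ := hΨΦ hβ
    set c := pairInt β α with hc
    have hβ₂Ψ : β - cv α β • α ∈ Ψ := hΨcl α hα β hβ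
    have hβ₂Φ := hΨΦ hβ₂Ψ
    have hsm : cv α β • α = c • α := by
      rw [← hpair α hαΦ β hβΦ]
      exact Int.cast_smul_eq_zsmul ℝ c α
    have hel : (⟨β - cv α β • α, hspan _ hβ₂Ψ⟩ : span ℤ (Γ : Set V))
        = ⟨β, hspan β hβ⟩ - c • ⟨α, hspan α hα⟩ := by
      apply Subtype.ext
      simp only [AddSubgroupClass.coe_sub, SetLike.val_smul]
      rw [hsm]
    have hrepr₂ : b.repr ⟨β - cv α β • α, hspan _ hβ₂Ψ⟩
        = b.repr ⟨β, hspan β hβ⟩ - c • b.repr ⟨α, hspan α hα⟩ := by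
      rw [hel, map_sub, map_smul]
    have hn₂ : n (β - cv α β • α) = n β := (hF α hα β hβ).1
    refine ⟨hβ₂Ψ, ?_, ?_⟩
    · intro γ
      rw [hn₂, hrepr₂, Finsupp.sub_apply, Finsupp.smul_apply, smul_eq_mul, sub_mul]
      refine dvd_sub (hdβ γ) ?_
      rw [mul_assoc]
      obtain ⟨t, ht⟩ := hdα γ
      rw [ht, ← mul_assoc]
      exact Dvd.dvd.mul_right (hF α hα β hβ).2 t
    · -- construct the functional
      have hdvd : (n α : ℤ) ∣ fβ ⟨α, hspan α hα⟩ := by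
        rw [hE2 fβ ⟨α, hspan α hα⟩]
        refine Finset.dvd_sum fun γ _ => ?_
        obtain ⟨t, ht⟩ := hdα γ
        obtain ⟨u, hu⟩ := hfβdiv γ
        refine ⟨t * u, ?_⟩
        calc b.repr ⟨α, hspan α hα⟩ γ * fβ (b γ)
            = b.repr ⟨α, hspan α hα⟩ γ * ((n (γ : V) : ℤ) * u) := by rw [hu]
          _ = (n α : ℤ) * t * u := by rw [← mul_assoc, ht]
          _ = (n α : ℤ) * (t * u) := by ring
      obtain ⟨s, hs⟩ := hdvd
      let h₀ : span ℤ (Γ : Set V) →ₗ[ℤ] ℤ := b.constr ℤ (fun γ => pairInt (γ : V) α * n α)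
      have hh₀b : ∀ γ : Γ, h₀ (b γ) = pairInt (γ : V) α * n α := by
        intro γ
        simp [h₀]
      have hh₀val : h₀ ⟨β - cv α β • α, hspan _ hβ₂Ψ⟩ = -c * n α := by
        rw [show h₀ ⟨β - cv α β • α, hspan _ hβ₂Ψ⟩
            = (b.repr ⟨β - cv α β • α, hspan _ hβ₂Ψ⟩).sum
              fun γ a => a • (pairInt (γ : V) α * (n α : ℤ)) from Basis.constr_apply b ℤ _ _]
        have hsum : ((b.repr ⟨β - cv α β • α, hspan _ hβ₂Ψ⟩).sum
              fun γ a => a • (pairInt (γ : V) α * (n α : ℤ)))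
            = ((b.repr ⟨β - cv α β • α, hspan _ hβ₂Ψ⟩).sum
              fun γ a => a * pairInt (γ : V) α) * n α := by
          rw [Finsupp.sum_mul]
          refine Finsupp.sum_congr fun γ _ => ?_
          rw [smul_eq_mul]
          ring
        rw [hsum, hE3 α hαΦ _ hβ₂Φ]
        have : pairInt ((⟨β - cv α β • α, hspan _ hβ₂Ψ⟩ : span ℤ (Γ : Set V)) : V) α
            = -c := hpair_s α hαΦ β hβΦ
        rw [this]
      refine ⟨fβ - s • h₀, ?_, ?_⟩
      · intro γ
        rw [LinearMap.sub_apply, LinearMap.smul_apply, smul_eq_mul, hh₀b γ]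
        exact dvd_sub (hfβdiv γ) (Dvd.dvd.mul_left ((hF α hα (γ : V) (hΓΨ γ.2)).2) s)
      · rw [LinearMap.sub_apply, LinearMap.smul_apply, smul_eq_mul, hh₀val, hel, map_sub,
          map_smul, smul_eq_mul, hfβval, hs, hn₂]
        ring
  have hmain : Ψ ⊆ {α : V | P α} :=
    hmin _ ⟨fun α hPα => hΨΦ hPα.choose, hPcl⟩ (fun γ hγ => hΓP γ hγ)
  -- W-invariance of n
  have hWinv : ∀ α ∈ Ψ, ∀ w ∈ WGroup cv Ψ (fun α hα => h2 α (hΨΦ hα)), n (w α) = n α := by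
    intro α hα w hw
    suffices h : (∀ α ∈ Ψ, w α ∈ Ψ ∧ n (w α) = n α) ∧
        (∀ α ∈ Ψ, w⁻¹ α ∈ Ψ ∧ n (w⁻¹ α) = n α) from (h.1 α hα).2
    clear hα
    refine Subgroup.closure_induction
      (p := fun w _ => (∀ α ∈ Ψ, w α ∈ Ψ ∧ n (w α) = n α) ∧
        (∀ α ∈ Ψ, w⁻¹ α ∈ Ψ ∧ n (w⁻¹ α) = n α)) ?_ ?_ ?_ ?_ hw
    · rintro x ⟨β, hβ, rfl⟩
      have hinv : (Module.reflection (h2 β (hΨΦ hβ)))⁻¹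
          = Module.reflection (h2 β (hΨΦ hβ)) := rfl
      constructor
      · intro α hα
        rw [Module.reflection_apply]
        exact ⟨hΨcl β hβ α hα, (hF β hβ α hα).1⟩
      · intro α hα
        rw [hinv, Module.reflection_apply]
        exact ⟨hΨcl β hβ α hα, (hF β hβ α hα).1⟩
    · exact ⟨fun α hα => ⟨hα, rfl⟩, fun α hα => ⟨hα, rfl⟩⟩
    · intro x y hx hy ihx ihy
      constructor
      · intro α hα
        have h1 := ihy.1 α hα
        have h2' := ihx.1 _ h1.1
        have hxy : (x * y) α = x (y α) := rfl
        rw [hxy]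
        exact ⟨h2'.1, h2'.2.trans h1.2⟩
      · intro α hα
        have h1 := ihx.2 α hα
        have h2' := ihy.2 _ h1.1
        have hxy : (x * y)⁻¹ α = y⁻¹ (x⁻¹ α) := by rw [mul_inv_rev]; rfl
        rw [hxy]
        exact ⟨h2'.1, h2'.2.trans h1.2⟩
    · intro x hx ih
      refine ⟨ih.2, ?_⟩
      intro α hα
      rw [inv_inv]
      exact ih.1 α hα
  -- the admissible subgroup
  let X : AddSubgroup (span ℤ (Γ : Set V) →ₗ[ℤ] ℤ) :=
    { carrier := {f | ∀ α, ∀ hα : α ∈ Ψ, (n α : ℤ) ∣ f ⟨α, hspan α hα⟩}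
      zero_mem' := fun α hα => by
        rw [LinearMap.zero_apply]
        exact dvd_zero _
      add_mem' := fun hf hg α hα => by
        rw [LinearMap.add_apply]
        exact dvd_add (hf α hα) (hg α hα)
      neg_mem' := fun hf α hα => by
        rw [LinearMap.neg_apply]
        exact dvd_neg.mpr (hf α hα) }
  have hXmem : ∀ f : span ℤ (Γ : Set V) →ₗ[ℤ] ℤ,
      (∀ γ : Γ, (n (γ : V) : ℤ) ∣ f (b γ)) → f ∈ X := by
    intro f hf α hα
    obtain ⟨hα', hdα, -⟩ := hmain hα
    have hdα' : ∀ γ : Γ, (n α : ℤ) ∣ b.repr ⟨α, hspan α hα⟩ γ * n (γ : V) := hdα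
    rw [hE2 f ⟨α, hspan α hα⟩]
    refine Finset.dvd_sum fun γ _ => ?_
    obtain ⟨t, ht⟩ := hdα' γ
    obtain ⟨u, hu⟩ := hf γ
    refine ⟨t * u, ?_⟩
    calc b.repr ⟨α, hspan α hα⟩ γ * f (b γ)
        = b.repr ⟨α, hspan α hα⟩ γ * ((n (γ : V) : ℤ) * u) := by rw [hu]
      _ = (n α : ℤ) * t * u := by rw [← mul_assoc, ht]
      _ = (n α : ℤ) * (t * u) := by ring
  have hXval : ∀ α (hα : α ∈ Ψ),
      Z α = Xval Γ (X : Set (span ℤ (Γ : Set V) →ₗ[ℤ] ℤ)) (hspan α hα) := by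
    intro α hα
    obtain ⟨hα', hdα, f, hfdiv, hfval⟩ := hmain hα
    have hfval' : f ⟨α, hspan α hα⟩ = n α := hfval
    rw [hZn α hα]
    ext z
    constructor
    · rintro ⟨k, rfl⟩
      refine ⟨k • f, ?_, ?_⟩
      · exact AddSubgroup.zsmul_mem X (hXmem f hfdiv) k
      · rw [LinearMap.smul_apply, hfval', smul_eq_mul]
        ring
    · rintro ⟨g, hg, rfl⟩
      exact zmul_mem_iff.mpr (hg α hα)
  refine ⟨X, ⟨⟨n, fun α hα β hβ => (hF α hα β hβ).2, hWinv, rfl⟩, hXval⟩, ?_⟩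
  rintro X' ⟨⟨N', hN1, hN2, hN3⟩, hX'val⟩
  have hmemN : ∀ α (hα : α ∈ Ψ), (N' α : ℤ) ∣ (n α : ℤ) := by
    intro α hα
    have hval : ((n α : ℤ)) ∈ Xval Γ (X' : Set (span ℤ (Γ : Set V) →ₗ[ℤ] ℤ))
        (hspan α hα) := by
      rw [← hX'val α hα, hZn α hα]
      exact self_mem_zmul _
    obtain ⟨g, hg, hgval⟩ := hval
    have hg' : g ∈ {f : span ℤ (Γ : Set V) →ₗ[ℤ] ℤ |
        ∀ α, ∀ hα : α ∈ Ψ, (N' α : ℤ) ∣ f ⟨α, hspan α hα⟩} := hN3 ▸ hg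
    exact hgval ▸ hg' α hα
  ext f
  constructor
  · intro hf
    have hdf : ∀ α (hα : α ∈ Ψ), (n α : ℤ) ∣ f ⟨α, hspan α hα⟩ := by
      intro α hα
      have hmem : f ⟨α, hspan α hα⟩ ∈ Xval Γ (X' : Set (span ℤ (Γ : Set V) →ₗ[ℤ] ℤ))
          (hspan α hα) := ⟨f, hf, rfl⟩
      rw [← hX'val α hα, hZn α hα] at hmem
      exact zmul_mem_iff.mp hmem
    exact hdf
  · intro hf
    have hf' : ∀ α (hα : α ∈ Ψ), (n α : ℤ) ∣ f ⟨α, hspan α hα⟩ := hf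
    have hmem : f ∈ (X' : Set (span ℤ (Γ : Set V) →ₗ[ℤ] ℤ)) := by
      rw [hN3]
      intro α hα
      exact (hmemN α hα).trans (hf' α hα)
    exact hmem
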